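/- For every nonempty area sequence w, the number of bounces of w equals the maximum value of ψ(w); that is, |bounces(w)| = max(ψ(w)). -/

import Mathlib

/-- The `i`-th letter of the word `w` (`1`-indexed, as in the paper);
defaults to `0` out of range. -/
def get1 (w : List ℕ) (i : ℕ) : ℕ := w.getD (i - 1) 0

/-- `w` is the area sequence of a Dyck path: the first letter is `0` and each
letter exceeds the previous one by at most one. -/
def IsAreaSeq (w : List ℕ) : Prop :=
  (w ≠ [] → get1 w 1 = 0) ∧ ∀ i, 1 ≤ i → i < w.length → get1 w (i + 1) ≤ get1 w i + 1

/-- Insertion at position `i` (for `0 ≤ i ≤ n`): `ins w 0` prepends a `0`, and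
for `1 ≤ i ≤ n`, `ins w i` inserts the letter `w_i + 1` just after position `i`. -/
def ins (w : List ℕ) (i : ℕ) : List ℕ :=
  w.take i ++ (if i = 0 then 0 else get1 w i + 1) :: w.drop i

/-- The area statistic: the sum of the letters. -/
def area (w : List ℕ) : ℕ := w.sum

/-- The dinv statistic: `dinv w = Σ_i d_i` where `d_i` is the number of `j > i`
with `w_j = w_i` or `w_j = w_i - 1`. -/
def dinv (w : List ℕ) : ℕ :=
  ∑ i ∈ Finset.Icc 1 w.length,
    ((Finset.Ioc i w.length).filter
      (fun j => get1 w j = get1 w i ∨ get1 w j + 1 = get1 w i)).card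

/-- The maximal value of a word (`0` for the empty word). -/
def maxVal (w : List ℕ) : ℕ := w.foldr max 0

/-- Positions of the letters of maximal value `m`. -/
def Maxb (w : List ℕ) : Finset ℕ :=
  (Finset.Icc 1 w.length).filter (fun i => get1 w i = maxVal w)

/-- Positions `i` with `w_i = m - 1` such that all letters after position `i`
are `< m`. -/
def Maxa (w : List ℕ) : Finset ℕ :=
  (Finset.Icc 1 w.length).filter (fun i =>
    get1 w i + 1 = maxVal w ∧ ∀ j ∈ Finset.Ioc i w.length, get1 w j < maxVal w)

/-- The position of the leftmost letter equal to the maximal value `m` in the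
rightmost block of consecutive letters equal to `m`. -/
def i0 (w : List ℕ) : ℕ :=
  ((Finset.Icc 1 w.length).filter (fun i =>
    get1 w i = maxVal w ∧ (i = 1 ∨ get1 w (i - 1) ≠ maxVal w))).sup id

/-- The admissible insertion positions of `w`, listed in admissible order:
the elements of `Maxb w` in decreasing order, then the elements of `Maxa w`
in decreasing order, then `i0 w - 1`.  The empty word has the single
admissible insertion position `0`. -/
def admissible (w : List ℕ) : List ℕ :=
  if w = [] then [0]
  else ((Maxb w).sort (· ≤ ·)).reverse ++ ((Maxa w).sort (· ≤ ·)).reverse ++ [i0 w - 1]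

/-- Auxiliary version of the map `ψ`, reading the reversed word. -/
def psiRev : List ℕ → List ℕ
  | [] => []
  | a :: u => ins (psiRev u) ((admissible (psiRev u)).getD a 0)

/-- The map `ψ`: `ψ(ε) = ε` and `ψ(u a) = ins_{c_a}(ψ(u))` where
`c_0, c_1, …, c_k` are the admissible insertion positions of `ψ(u)` in
admissible order. -/
def psi (w : List ℕ) : List ℕ := psiRev w.reverse

/-- The bounce sequence: `b_1 = 0`, and `b_i = b_{i-1} + 1` if
`b_{i-1} + 1 ≤ w_i`, otherwise `b_i = 0`. -/
def bseq (w : List ℕ) : ℕ → ℕ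
  | 0 => 0
  | 1 => 0
  | (i + 2) => if bseq w (i + 1) + 1 ≤ get1 w (i + 2) then bseq w (i + 1) + 1 else 0

/-- The bounces of `w`: positions `1 < i ≤ n` with `b_i = 0`. -/
def bounces (w : List ℕ) : Finset ℕ :=
  (Finset.Icc 2 w.length).filter (fun i => bseq w i = 0)

/-- The bounce statistic: the sum of the reversed positions `n - i + 1` of the
bounces of `w`. -/
def bounce (w : List ℕ) : ℕ := ∑ i ∈ bounces w, (w.length - i + 1)

section Aux

/-! ### Basic lemmas on `get1`, `ins`, `maxVal` -/

lemma get1_eq_getD (w : List ℕ) (j : ℕ) : get1 w j = w.getD (j-1) 0 := rfl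

lemma get1_out (w : List ℕ) {j : ℕ} (h : w.length < j) : get1 w j = 0 := by
  unfold get1
  rw [List.getD_eq_getElem?_getD, List.getElem?_eq_none (by omega)]
  rfl

lemma get1_mem (w : List ℕ) {j : ℕ} (h1 : 1 ≤ j) (h2 : j ≤ w.length) : get1 w j ∈ w := by
  unfold get1
  rw [List.getD_eq_getElem _ _ (show j - 1 < w.length by omega)]
  exact List.getElem_mem _

lemma length_ins (w : List ℕ) {i : ℕ} (hi : i ≤ w.length) : (ins w i).length = w.length + 1 := by
  simp [ins]
  omega

lemma get1_ins_le (w : List ℕ) {i j : ℕ} (hi : i ≤ w.length) (h1 : 1 ≤ j) (h2 : j ≤ i) :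
    get1 (ins w i) j = get1 w j := by
  unfold ins get1
  rw [List.getD_append _ _ _ _ (by simp; omega)]
  simp [List.getD_eq_getElem?_getD, List.getElem?_take, show j - 1 < i from by omega]

lemma get1_ins_mid (w : List ℕ) {i : ℕ} (hi : i ≤ w.length) :
    get1 (ins w i) (i+1) = if i = 0 then 0 else get1 w i + 1 := by
  unfold ins get1
  rw [List.getD_append_right _ _ _ _ (by rw [List.length_take]; omega)]
  have h1 : i + 1 - 1 - (w.take i).length = 0 := by rw [List.length_take]; omega
  rw [h1, List.getD_cons_zero]

lemma get1_ins_ge (w : List ℕ) {i j : ℕ} (hi : i ≤ w.length) (h : i + 2 ≤ j) :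
    get1 (ins w i) j = get1 w (j-1) := by
  obtain ⟨k, rfl⟩ : ∃ k, j = i + 2 + k := ⟨j - i - 2, by omega⟩
  unfold ins get1
  rw [List.getD_append_right _ _ _ _ (by rw [List.length_take]; omega)]
  have h1 : i + 2 + k - 1 - (w.take i).length = k + 1 := by
    rw [List.length_take, Nat.min_eq_left hi]; omega
  have h2 : i + 2 + k - 1 - 1 = i + k := by omega
  rw [h1, List.getD_cons_succ, h2]
  rw [List.getD_eq_getElem?_getD, List.getD_eq_getElem?_getD, List.getElem?_drop]

lemma maxVal_cons (x : ℕ) (t : List ℕ) : maxVal (x :: t) = max x (maxVal t) := rfl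

lemma maxVal_append (a b : List ℕ) : maxVal (a ++ b) = max (maxVal a) (maxVal b) := by
  induction a with
  | nil => simp [maxVal]
  | cons x t ih => simp [maxVal_cons, ih, max_assoc]

lemma le_maxVal (w : List ℕ) {x : ℕ} (hx : x ∈ w) : x ≤ maxVal w := by
  induction w with
  | nil => simp at hx
  | cons y t ih =>
      rcases List.mem_cons.mp hx with rfl | h
      · exact le_max_left _ _
      · exact le_trans (ih h) (le_max_right _ _)

lemma get1_le_maxVal (w : List ℕ) (j : ℕ) : get1 w j ≤ maxVal w := by
  unfold get1
  rcases lt_or_ge (j-1) w.length with h | h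
  · rw [List.getD_eq_getElem _ _ h]
    exact le_maxVal _ (List.getElem_mem _)
  · rw [List.getD_eq_getElem?_getD, List.getElem?_eq_none h]
    exact Nat.zero_le _

lemma maxVal_mem (w : List ℕ) (hw : w ≠ []) : maxVal w ∈ w := by
  induction w with
  | nil => simp at hw
  | cons x t ih =>
      rcases eq_or_ne t [] with rfl | ht
      · simp [maxVal]
      · rw [maxVal_cons]
        rcases max_cases x (maxVal t) with ⟨h, _⟩ | ⟨h, _⟩
        · rw [h]; exact List.mem_cons_self
        · rw [h]; exact List.mem_cons_of_mem _ (ih ht)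

lemma mem_get1 (w : List ℕ) {x : ℕ} (hx : x ∈ w) :
    ∃ j, 1 ≤ j ∧ j ≤ w.length ∧ get1 w j = x := by
  obtain ⟨k, hk, hkx⟩ := List.mem_iff_getElem.mp hx
  exact ⟨k+1, by omega, by omega, by rw [get1_eq_getD, List.getD_eq_getElem _ _ (by omega)]; simpa using hkx⟩

lemma maxVal_ins (w : List ℕ) {i : ℕ} (hi : i ≤ w.length) :
    maxVal (ins w i) = max (if i = 0 then 0 else get1 w i + 1) (maxVal w) := by
  unfold ins
  rw [maxVal_append, maxVal_cons]
  have : max (maxVal (w.take i)) (maxVal (w.drop i)) = maxVal w := by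
    rw [← maxVal_append, List.take_append_drop]
  omega

end Aux
section Aux2

/-! ### Area sequences and insertion; append lemmas; bounce lemmas -/

lemma isAreaSeq_ins (w : List ℕ) {i : ℕ} (hw : IsAreaSeq w) (hi : i ≤ w.length) :
    IsAreaSeq (ins w i) := by
  constructor
  · intro _
    rcases Nat.eq_zero_or_pos i with rfl | hipos
    · simpa using get1_ins_mid w hi
    · rw [get1_ins_le w hi le_rfl hipos]
      exact hw.1 (by intro h; rw [h] at hi; simp at hi; omega)
  · intro j hj1 hj2
    rw [length_ins w hi] at hj2
    rcases lt_or_ge j i with hc | hc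
    · -- j + 1 ≤ i
      rw [get1_ins_le w hi (by omega) (by omega), get1_ins_le w hi hj1 (by omega)]
      exact hw.2 j hj1 (by omega)
    rcases eq_or_lt_of_le hc with rfl | hc2
    · -- j = i
      rw [get1_ins_mid w hi, get1_ins_le w hi hj1 le_rfl, if_neg (by omega)]
    rcases eq_or_lt_of_le (Nat.succ_le_of_lt hc2) with hc3 | hc3
    · -- j = i + 1
      have hj : j = i + 1 := hc3.symm
      subst hj
      rw [get1_ins_ge w hi (by omega), get1_ins_mid w hi]
      simp only [Nat.add_sub_cancel]
      rcases Nat.eq_zero_or_pos i with rfl | hipos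
      · rw [if_pos rfl]
        have := hw.1 (by intro h; rw [h] at hj2; simp at hj2)
        simp only [Nat.zero_add]
        omega
      · rw [if_neg (by omega)]
        have := hw.2 i hipos (by omega)
        omega
    · -- j ≥ i + 2
      rw [get1_ins_ge w hi (by omega), get1_ins_ge w hi (by omega)]
      have h3 : j + 1 - 1 = (j - 1) + 1 := by omega
      rw [h3]
      exact hw.2 (j-1) (by omega) (by omega)

lemma get1_append (u t : List ℕ) (hu : u ≠ []) {j : ℕ} (h2 : j ≤ u.length) :
    get1 (u ++ t) j = get1 u j := by
  have hl : 1 ≤ u.length := by cases u <;> simp_all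
  unfold get1
  rw [List.getD_append _ _ _ _ (by omega)]

lemma get1_append_last (u : List ℕ) (a : ℕ) : get1 (u ++ [a]) (u.length + 1) = a := by
  unfold get1
  rw [List.getD_append_right _ _ _ _ (by omega)]
  simp

lemma isAreaSeq_prefix {u : List ℕ} {a : ℕ} (hw : IsAreaSeq (u ++ [a])) : IsAreaSeq u := by
  constructor
  · intro hu
    have h1 := hw.1 (by simp)
    rwa [get1_append u [a] hu (by cases u <;> simp_all)] at h1
  · intro j hj1 hj2
    have hu : u ≠ [] := by intro h; rw [h] at hj2; simp at hj2
    have := hw.2 j hj1 (by simp; omega)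
    rwa [get1_append u [a] hu (by omega), get1_append u [a] hu (by omega)] at this

lemma last_le {u : List ℕ} {a : ℕ} (hw : IsAreaSeq (u ++ [a])) (hu : u ≠ []) :
    a ≤ get1 u u.length + 1 := by
  have h1 : 1 ≤ u.length := by cases u <;> simp_all
  have := hw.2 u.length h1 (by simp)
  rwa [get1_append_last, get1_append u [a] hu le_rfl] at this

lemma bseq_congr (w w' : List ℕ) (i : ℕ) (h : ∀ j, 2 ≤ j → j ≤ i → get1 w j = get1 w' j) :
    bseq w i = bseq w' i := by
  induction i with
  | zero => rfl
  | succ k ih =>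
      match k with
      | 0 => rfl
      | t+1 =>
          rw [show t+1+1 = t+2 from rfl, bseq, bseq]
          rw [ih (fun j hj1 hj2 => h j hj1 (by omega)), h (t+2) (by omega) (by omega)]

lemma bseq_le (w : List ℕ) (i : ℕ) : bseq w i ≤ get1 w i := by
  match i with
  | 0 => simp [bseq]
  | 1 => simp [bseq]
  | t+2 =>
      rw [bseq]
      split <;> omega

lemma bseq_last {u : List ℕ} (a : ℕ) (hu : u ≠ []) :
    bseq (u ++ [a]) (u.length + 1) =
      if bseq u u.length + 1 ≤ a then bseq u u.length + 1 else 0 := by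
  obtain ⟨k, hk⟩ : ∃ k, u.length = k + 1 := ⟨u.length - 1, by cases u <;> simp_all⟩
  rw [hk]
  rw [show k + 1 + 1 = k + 2 from rfl, bseq]
  have h1 : bseq (u ++ [a]) (k+1) = bseq u (k+1) := by
    apply bseq_congr
    intro j hj1 hj2
    rw [get1_append u [a] hu (by omega)]
  have h2 : get1 (u ++ [a]) (k + 2) = a := by
    have := get1_append_last u a
    rwa [hk] at this
  rw [h1, h2]

lemma bounces_card_append {u : List ℕ} (a : ℕ) (hu : 1 ≤ u.length) :
    (bounces (u ++ [a])).card =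
      (bounces u).card + (if bseq (u ++ [a]) (u.length + 1) = 0 then 1 else 0) := by
  unfold bounces
  have hlen : (u ++ [a]).length = u.length + 1 := by simp
  rw [hlen]
  have hIcc : Finset.Icc 2 (u.length + 1) = insert (u.length + 1) (Finset.Icc 2 u.length) := by
    rw [← Finset.insert_Icc_right_eq_Icc_add_one (by omega)]
  rw [hIcc, Finset.filter_insert]
  have hfilter : (Finset.Icc 2 u.length).filter (fun i => bseq (u ++ [a]) i = 0) =
      (Finset.Icc 2 u.length).filter (fun i => bseq u i = 0) := by
    apply Finset.filter_congr
    intro j hj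
    simp only [Finset.mem_Icc] at hj
    rw [bseq_congr (u ++ [a]) u j
      (fun t ht1 ht2 => get1_append u [a] (List.length_pos_iff.mp (by omega)) (by omega))]
  split
  · rw [Finset.card_insert_of_notMem (by simp), hfilter]
  · rw [hfilter]; simp

end Aux2
section Aux3

/-! ### `Maxb`, `Maxa`, `i0` and how they change under admissible insertions -/

lemma mem_Maxb {w : List ℕ} {j : ℕ} :
    j ∈ Maxb w ↔ 1 ≤ j ∧ j ≤ w.length ∧ get1 w j = maxVal w := by
  simp only [Maxb, Finset.mem_filter, Finset.mem_Icc]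
  tauto

lemma mem_Maxa {w : List ℕ} {j : ℕ} :
    j ∈ Maxa w ↔ 1 ≤ j ∧ j ≤ w.length ∧ get1 w j + 1 = maxVal w ∧
      ∀ k, j < k → k ≤ w.length → get1 w k < maxVal w := by
  simp only [Maxa, Finset.mem_filter, Finset.mem_Icc, Finset.mem_Ioc]
  constructor
  · rintro ⟨⟨a, b⟩, c, d⟩
    exact ⟨a, b, c, fun k hk1 hk2 => d k ⟨hk1, hk2⟩⟩
  · rintro ⟨a, b, c, d⟩
    exact ⟨⟨a, b⟩, c, fun k hk => d k hk.1 hk.2⟩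

lemma Maxb_nonempty (w : List ℕ) (hw : w ≠ []) : (Maxb w).Nonempty := by
  obtain ⟨j, hj1, hj2, hj3⟩ := mem_get1 w (maxVal_mem w hw)
  exact ⟨j, mem_Maxb.mpr ⟨hj1, hj2, hj3⟩⟩

lemma insert_at_max (w : List ℕ) {i : ℕ} (h1 : 1 ≤ i) (h2 : i ≤ w.length)
    (h3 : get1 w i = maxVal w) :
    maxVal (ins w i) = maxVal w + 1 ∧ Maxb (ins w i) = {i+1} ∧
    Maxa (ins w i) = ((Maxb w).filter (fun y => i < y)).image (· + 1) := by
  set m := maxVal w with hm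
  have hlen := length_ins w h2
  have hmax : maxVal (ins w i) = m + 1 := by
    rw [maxVal_ins w h2, if_neg (by omega), h3]
    omega
  refine ⟨hmax, ?_, ?_⟩
  · ext j
    simp only [mem_Maxb, hmax, hlen, Finset.mem_singleton]
    constructor
    · rintro ⟨ha, hb, hc⟩
      by_contra hne
      rcases lt_trichotomy j (i+1) with hj | hj | hj
      · rw [get1_ins_le w h2 ha (by omega)] at hc
        have := get1_le_maxVal w j
        omega
      · exact hne hj
      · rw [get1_ins_ge w h2 (by omega)] at hc
        have := get1_le_maxVal w (j-1)
        omega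
    · rintro rfl
      refine ⟨by omega, by omega, ?_⟩
      rw [get1_ins_mid w h2, if_neg (by omega), h3]
  · ext j
    simp only [mem_Maxa, mem_Maxb, hmax, hlen, Finset.mem_image, Finset.mem_filter]
    constructor
    · rintro ⟨ha, hb, hc, hd⟩
      have hji : i + 2 ≤ j := by
        by_contra hne
        rcases lt_trichotomy j (i+1) with hj | hj | hj
        · have := hd (i+1) (by omega) (by omega)
          rw [get1_ins_mid w h2, if_neg (by omega), h3] at this
          omega
        · rw [hj, get1_ins_mid w h2, if_neg (by omega), h3] at hc
          omega
        · omega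
      rw [get1_ins_ge w h2 hji] at hc
      exact ⟨j-1, ⟨⟨by omega, by omega, by omega⟩, by omega⟩, by omega⟩
    · rintro ⟨y, ⟨⟨hy1, hy2, hy3⟩, hy4⟩, rfl⟩
      refine ⟨by omega, by omega, ?_, ?_⟩
      · rw [get1_ins_ge w h2 (by omega)]
        simp only [Nat.add_sub_cancel]
        omega
      · intro k hk1 hk2
        rw [get1_ins_ge w h2 (by omega)]
        have := get1_le_maxVal w (k-1)
        omega

lemma insert_letter_eq_max (w : List ℕ) {r : ℕ} (hr : r ≤ w.length)
    (hlet : (if r = 0 then 0 else get1 w r + 1) = maxVal w) :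
    maxVal (ins w r) = maxVal w ∧
    (Maxb (ins w r)).card = (Maxb w).card + 1 ∧
    Maxa (ins w r) = ((Maxa w).filter (fun y => r < y)).image (· + 1) := by
  set m := maxVal w with hm
  have hlen := length_ins w hr
  have hmax : maxVal (ins w r) = m := by
    rw [maxVal_ins w hr, hlet]
    omega
  have hmid : get1 (ins w r) (r+1) = m := by rw [get1_ins_mid w hr, hlet]
  refine ⟨hmax, ?_, ?_⟩
  · have hset : Maxb (ins w r) =
        insert (r+1) (((Maxb w).filter (fun y => y ≤ r)) ∪
          ((Maxb w).filter (fun y => r < y)).image (· + 1)) := by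
      ext j
      simp only [mem_Maxb, hmax, hlen, Finset.mem_insert, Finset.mem_union,
        Finset.mem_filter, Finset.mem_image]
      constructor
      · rintro ⟨ha, hb, hc⟩
        rcases lt_trichotomy j (r+1) with hj | hj | hj
        · rw [get1_ins_le w hr ha (by omega)] at hc
          exact Or.inr (Or.inl ⟨⟨ha, by omega, hc⟩, by omega⟩)
        · exact Or.inl hj
        · rw [get1_ins_ge w hr (by omega)] at hc
          exact Or.inr (Or.inr ⟨j-1, ⟨⟨by omega, by omega, hc⟩, by omega⟩, by omega⟩)
      · rintro (rfl | ⟨⟨⟨hy1, hy2, hy3⟩, hy4⟩ | ⟨y, ⟨⟨hy1, hy2, hy3⟩, hy4⟩, rfl⟩⟩)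
        · exact ⟨by omega, by omega, hmid⟩
        · exact ⟨hy1, by omega, by rwa [get1_ins_le w hr hy1 hy4]⟩
        · refine ⟨by omega, by omega, ?_⟩
          rw [get1_ins_ge w hr (by omega)]
          simpa using hy3
    rw [hset]
    rw [Finset.card_insert_of_notMem (by
      simp only [Finset.mem_union, Finset.mem_filter, Finset.mem_image, not_or]
      constructor
      · rintro ⟨-, h⟩; omega
      · rintro ⟨y, ⟨-, hy⟩, hy2⟩; omega)]
    rw [Finset.card_union_of_disjoint (by
      rw [Finset.disjoint_left]
      intro x hx1 hx2
      simp only [Finset.mem_filter] at hx1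
      simp only [Finset.mem_image, Finset.mem_filter] at hx2
      obtain ⟨y, ⟨-, hy⟩, rfl⟩ := hx2
      omega)]
    rw [Finset.card_image_of_injective _ (fun x y h => by omega)]
    have := Finset.card_filter_add_card_filter_not (s := Maxb w)
      (p := fun y => y ≤ r)
    rw [show (Maxb w).filter (fun y => ¬ y ≤ r) = (Maxb w).filter (fun y => r < y) from
      Finset.filter_congr (fun x _ => by simp [not_le])] at this
    omega
  · ext j
    simp only [mem_Maxa, hmax, hlen, Finset.mem_image, Finset.mem_filter]
    constructor
    · rintro ⟨ha, hb, hc, hd⟩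
      have hji : r + 2 ≤ j := by
        by_contra hne
        rcases lt_trichotomy j (r+1) with hj | hj | hj
        · have := hd (r+1) (by omega) (by omega)
          omega
        · rw [hj, hmid] at hc
          omega
        · omega
      rw [get1_ins_ge w hr hji] at hc
      refine ⟨j-1, ⟨⟨by omega, by omega, by omega, ?_⟩, by omega⟩, by omega⟩
      intro k hk1 hk2
      have := hd (k+1) (by omega) (by omega)
      rwa [get1_ins_ge w hr (by omega), Nat.add_sub_cancel] at this
    · rintro ⟨y, ⟨⟨hy1, hy2, hy3, hy4⟩, hy5⟩, rfl⟩
      refine ⟨by omega, by omega, ?_, ?_⟩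
      · rw [get1_ins_ge w hr (by omega)]
        simpa using hy3
      · intro k hk1 hk2
        rw [get1_ins_ge w hr (by omega)]
        exact hy4 (k-1) (by omega) (by omega)

lemma i0_spec (w : List ℕ) (hw : w ≠ []) :
    1 ≤ i0 w ∧ i0 w ≤ w.length ∧ get1 w (i0 w) = maxVal w ∧
      (i0 w = 1 ∨ get1 w (i0 w - 1) ≠ maxVal w) := by
  set I := (Finset.Icc 1 w.length).filter (fun i =>
    get1 w i = maxVal w ∧ (i = 1 ∨ get1 w (i - 1) ≠ maxVal w)) with hI
  have hne : I.Nonempty := by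
    obtain ⟨j0, hj0⟩ := Maxb_nonempty w hw
    have hj0' := mem_Maxb.mp hj0
    -- take the smallest element of Maxb
    obtain ⟨j, hj, hjmin⟩ := Finset.exists_min_image (Maxb w) id ⟨j0, hj0⟩
    have hj' := mem_Maxb.mp hj
    refine ⟨j, ?_⟩
    rw [hI, Finset.mem_filter, Finset.mem_Icc]
    refine ⟨⟨hj'.1, hj'.2.1⟩, hj'.2.2, ?_⟩
    rcases eq_or_ne j 1 with rfl | hj1
    · exact Or.inl rfl
    · refine Or.inr (fun hcon => ?_)
      have : j - 1 ∈ Maxb w := mem_Maxb.mpr ⟨by omega, by omega, hcon⟩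
      have := hjmin _ this
      simp at this
      omega
  have hmem : i0 w ∈ I := by
    have h1 : i0 w = I.max' hne := by
      rw [Finset.max'_eq_sup', Finset.sup'_eq_sup]
      rfl
    rw [h1]
    exact I.max'_mem hne
  rw [hI, Finset.mem_filter, Finset.mem_Icc] at hmem
  exact ⟨hmem.1.1, hmem.1.2, hmem.2.1, hmem.2.2⟩

lemma i0_letter (w : List ℕ) (hw : IsAreaSeq w) (hne : w ≠ []) :
    (if i0 w - 1 = 0 then 0 else get1 w (i0 w - 1) + 1) = maxVal w ∧
    i0 w - 1 ≤ w.length := by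
  obtain ⟨hs1, hs2, hs3, hs4⟩ := i0_spec w hne
  refine ⟨?_, by omega⟩
  rcases Nat.eq_zero_or_pos (maxVal w) with hm | hm
  · -- maximal value 0: i0 = 1
    have hi : i0 w = 1 := by
      by_contra hcon
      rcases hs4 with h | h
      · exact hcon h
      · have := get1_le_maxVal w (i0 w - 1)
        omega
    rw [hi]
    simp
    omega
  · -- maximal value ≥ 1 : i0 ≥ 2 and the previous letter is m - 1
    have h1 : get1 w 1 = 0 := hw.1 hne
    have hi2 : 2 ≤ i0 w := by
      rcases Nat.lt_or_ge (i0 w) 2 with h | h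
      · interval_cases h' : (i0 w) <;> simp_all <;> omega
      · exact h
    have hprev : get1 w (i0 w - 1) ≠ maxVal w := by
      rcases hs4 with h | h
      · omega
      · exact h
    have harea : get1 w (i0 w) ≤ get1 w (i0 w - 1) + 1 := by
      have := hw.2 (i0 w - 1) (by omega) (by omega)
      rwa [show i0 w - 1 + 1 = i0 w by omega] at this
    have hle := get1_le_maxVal w (i0 w - 1)
    rw [if_neg (by omega)]
    omega

lemma Maxa_gt_i0 (w : List ℕ) (hne : w ≠ []) {j : ℕ} (hj : j ∈ Maxa w) :
    i0 w - 1 < j := by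
  obtain ⟨hs1, hs2, hs3, hs4⟩ := i0_spec w hne
  obtain ⟨h1, h2, h3, h4⟩ := mem_Maxa.mp hj
  by_contra hcon
  -- then i0 w > j, so get1 w (i0 w) < maxVal w, contradiction
  rcases Nat.lt_or_ge j (i0 w) with h | h
  · have := h4 (i0 w) h hs2
    omega
  · omega

end Aux3
section Aux4

/-! ### Picking elements from the admissible list -/

lemma nth_largest (s : Finset ℕ) {a : ℕ} (ha : a < s.card) :
    ((s.sort (· ≤ ·)).reverse.getD a 0) ∈ s ∧
    (s.filter (fun y => ((s.sort (· ≤ ·)).reverse.getD a 0) < y)).card = a := by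
  set l := s.sort (· ≤ ·) with hl
  have hlen : l.length = s.card := s.length_sort _
  have hstrict : ∀ i j, (hi : i < l.length) → (hj : j < l.length) → i < j → l[i] < l[j] := by
    have := (Finset.sortedLT_sort s).pairwise
    rw [List.pairwise_iff_getElem] at this
    exact fun i j hi hj hij => this i j hi hj hij
  have hK : s.card - 1 - a < l.length := by omega
  have hx : l.reverse.getD a 0 = l[s.card - 1 - a] := by
    rw [List.getD_eq_getElem _ _ (by rw [List.length_reverse]; omega), List.getElem_reverse]
    congr 1
    omega
  have hmem : l[s.card - 1 - a] ∈ s := (Finset.mem_sort _).mp (List.getElem_mem _)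
  rw [hx]
  refine ⟨hmem, ?_⟩
  have himg : s.filter (fun y => l[s.card - 1 - a] < y) =
      (Finset.Ico (s.card - a) s.card).image (fun k => l.getD k 0) := by
    ext y
    simp only [Finset.mem_filter, Finset.mem_image, Finset.mem_Ico]
    constructor
    · rintro ⟨hy, hxy⟩
      have hyl : y ∈ l := (Finset.mem_sort _).mpr hy
      obtain ⟨k, hk, hky⟩ := List.mem_iff_getElem.mp hyl
      have hkK : s.card - 1 - a < k := by
        rcases lt_trichotomy k (s.card - 1 - a) with h | h | h
        · have := hstrict k (s.card - 1 - a) hk hK h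
          omega
        · subst h
          omega
        · exact h
      exact ⟨k, ⟨by omega, by omega⟩, by rw [List.getD_eq_getElem _ _ hk]; exact hky⟩
    · rintro ⟨k, ⟨hk1, hk2⟩, rfl⟩
      have hk : k < l.length := by omega
      rw [List.getD_eq_getElem _ _ hk]
      exact ⟨(Finset.mem_sort _).mp (List.getElem_mem _), hstrict _ _ hK hk (by omega)⟩
  rw [himg]
  rw [Finset.card_image_of_injOn (by
    intro k1 hk1 k2 hk2 heq
    simp only [Finset.coe_Ico, Set.mem_Ico] at hk1 hk2
    have heq' : l.getD k1 0 = l.getD k2 0 := heq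
    have e1 : k1 < l.length := by omega
    have e2 : k2 < l.length := by omega
    rw [List.getD_eq_getElem _ _ e1, List.getD_eq_getElem _ _ e2] at heq'
    rcases lt_trichotomy k1 k2 with h | h | h
    · have := hstrict k1 k2 (by omega) (by omega) h
      omega
    · exact h
    · have := hstrict k2 k1 (by omega) (by omega) h
      omega)]
  rw [Nat.card_Ico]
  omega

lemma admissible_getD_b (w : List ℕ) (hw : w ≠ []) {a : ℕ} (ha : a < (Maxb w).card) :
    (admissible w).getD a 0 = ((Maxb w).sort (· ≤ ·)).reverse.getD a 0 := by
  unfold admissible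
  rw [if_neg hw, List.append_assoc, List.getD_append _ _ _ _ (by
    rw [List.length_reverse, Finset.length_sort]; omega)]

lemma admissible_getD_a (w : List ℕ) (hw : w ≠ []) {a : ℕ} (ha : (Maxb w).card ≤ a)
    (ha2 : a - (Maxb w).card < (Maxa w).card) :
    (admissible w).getD a 0 = ((Maxa w).sort (· ≤ ·)).reverse.getD (a - (Maxb w).card) 0 := by
  unfold admissible
  rw [if_neg hw, List.append_assoc, List.getD_append_right _ _ _ _ (by
    rw [List.length_reverse, Finset.length_sort]; omega)]
  rw [List.getD_append _ _ _ _ (by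
    rw [List.length_reverse, Finset.length_sort, List.length_reverse, Finset.length_sort]; omega)]
  congr 1
  rw [List.length_reverse, Finset.length_sort]

lemma admissible_getD_last (w : List ℕ) (hw : w ≠ [])
    {a : ℕ} (ha : a = (Maxb w).card + (Maxa w).card) :
    (admissible w).getD a 0 = i0 w - 1 := by
  unfold admissible
  rw [if_neg hw, List.append_assoc, List.getD_append_right _ _ _ _ (by
    rw [List.length_reverse, Finset.length_sort]; omega)]
  rw [List.getD_append_right _ _ _ _ (by
    rw [List.length_reverse, Finset.length_sort, List.length_reverse, Finset.length_sort]; omega)]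
  rw [List.length_reverse, Finset.length_sort, List.length_reverse, Finset.length_sort]
  rw [show a - (Maxb w).card - (Maxa w).card = 0 by omega]
  rfl

lemma psi_append (u : List ℕ) (a : ℕ) :
    psi (u ++ [a]) = ins (psi u) ((admissible (psi u)).getD a 0) := by
  unfold psi
  rw [List.reverse_append]
  rfl

lemma psi_single (a : ℕ) : psi [a] = [0] := by
  have h : psi [a] = ins [] ((admissible []).getD a 0) := by
    unfold psi psiRev
    rfl
  rw [h]
  have h2 : admissible [] = [0] := by unfold admissible; rw [if_pos rfl]
  rw [h2]
  rcases Nat.eq_zero_or_pos a with rfl | hagt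
  · rfl
  · rw [List.getD_eq_default _ _ (by simp; omega)]
    rfl

end Aux4
section Main

lemma key (u : List ℕ) (hu : IsAreaSeq u) (hne : u ≠ []) :
    (psi u).length = u.length ∧ IsAreaSeq (psi u) ∧
    (Maxb (psi u)).card = bseq u u.length + 1 ∧
    (Maxa (psi u)).card = get1 u u.length - bseq u u.length ∧
    (bounces u).card = maxVal (psi u) := by
  induction u using List.reverseRecOn with
  | nil => exact absurd rfl hne
  | append_singleton u a ih =>
    rcases eq_or_ne u [] with rfl | hu0
    · -- base case: the word [a] with a = 0
      have ha : a = 0 := by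
        have := hu.1 (by simp)
        simpa [get1] using this
      subst ha
      simp only [List.nil_append]
      rw [psi_single]
      refine ⟨rfl, ?_, ?_, ?_, ?_⟩
      · exact ⟨fun _ => rfl, fun i h1 h2 => by simp at h2; omega⟩
      · decide
      · decide
      · decide
    · -- inductive step
      have hu' : IsAreaSeq u := isAreaSeq_prefix hu
      obtain ⟨ihlen, ihseq, ihb, iha, ihbounce⟩ := ih hu' hu0
      have hn1 : 1 ≤ u.length := by cases u <;> simp_all
      have hvne : psi u ≠ [] := by
        intro h
        rw [h] at ihlen
        simp at ihlen
        omega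
      have hbl : bseq u u.length ≤ get1 u u.length := bseq_le u u.length
      have ha : a ≤ get1 u u.length + 1 := last_le hu hu0
      have hw_len : (u ++ [a]).length = u.length + 1 := by simp
      have hbseq_end : bseq (u ++ [a]) (u.length + 1) =
          if bseq u u.length + 1 ≤ a then bseq u u.length + 1 else 0 := bseq_last a hu0
      have hbc := bounces_card_append a hn1
      have hg : get1 (u ++ [a]) (u.length + 1) = a := get1_append_last u a
      rw [psi_append]
      by_cases hcase : a ≤ bseq u u.length
      · -- Case 1: insertion at a maximal letter
        have haMaxb : a < (Maxb (psi u)).card := by omega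
        rw [admissible_getD_b (psi u) hvne haMaxb]
        obtain ⟨hmem, hcard⟩ := nth_largest (Maxb (psi u)) haMaxb
        set c := ((Maxb (psi u)).sort (· ≤ ·)).reverse.getD a 0 with hc
        obtain ⟨hc1, hc2, hc3⟩ := mem_Maxb.mp hmem
        obtain ⟨hmax', hMaxb', hMaxa'⟩ := insert_at_max (psi u) hc1 hc2 hc3
        have hbe : bseq (u ++ [a]) (u.length + 1) = 0 := by
          rw [hbseq_end, if_neg (by omega)]
        refine ⟨?_, isAreaSeq_ins (psi u) ihseq hc2, ?_, ?_, ?_⟩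
        · rw [length_ins (psi u) hc2, ihlen, hw_len]
        · rw [hw_len, hbe, hMaxb']
          simp
        · rw [hw_len, hbe, hg, hMaxa',
            Finset.card_image_of_injective _ (fun x y h => by omega), hcard]
          omega
        · rw [hbc, hmax', if_pos hbe, ihbounce]
      · by_cases hcase2 : a ≤ get1 u u.length
        · -- Case 2: insertion at a letter of value m - 1 after the last maximal letter
          have h1 : (Maxb (psi u)).card ≤ a := by omega
          have h2 : a - (Maxb (psi u)).card < (Maxa (psi u)).card := by omega
          rw [admissible_getD_a (psi u) hvne h1 h2]
          obtain ⟨hmem, hcard⟩ := nth_largest (Maxa (psi u)) h2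
          set c := ((Maxa (psi u)).sort (· ≤ ·)).reverse.getD (a - (Maxb (psi u)).card) 0 with hc
          obtain ⟨hc1, hc2, hc3, hc4⟩ := mem_Maxa.mp hmem
          have hlet : (if c = 0 then 0 else get1 (psi u) c + 1) = maxVal (psi u) := by
            rw [if_neg (by omega)]
            exact hc3
          obtain ⟨hmax', hMaxbcard', hMaxa'⟩ := insert_letter_eq_max (psi u) hc2 hlet
          have hbe : bseq (u ++ [a]) (u.length + 1) = bseq u u.length + 1 := by
            rw [hbseq_end, if_pos (by omega)]
          refine ⟨?_, isAreaSeq_ins (psi u) ihseq hc2, ?_, ?_, ?_⟩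
          · rw [length_ins (psi u) hc2, ihlen, hw_len]
          · rw [hw_len, hbe, hMaxbcard']
            omega
          · rw [hw_len, hbe, hg, hMaxa',
              Finset.card_image_of_injective _ (fun x y h => by omega), hcard]
            omega
          · rw [hbc, hmax', if_neg (by omega), ihbounce]
            omega
        · -- Case 3: insertion just before the rightmost maximal block
          have ha3 : a = get1 u u.length + 1 := by omega
          rw [admissible_getD_last (psi u) hvne (by omega)]
          obtain ⟨hlet, hle⟩ := i0_letter (psi u) ihseq hvne
          obtain ⟨hmax', hMaxbcard', hMaxa'⟩ := insert_letter_eq_max (psi u) hle hlet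
          have hfe : (Maxa (psi u)).filter (fun y => i0 (psi u) - 1 < y) = Maxa (psi u) :=
            Finset.filter_true_of_mem (fun j hj => Maxa_gt_i0 (psi u) hvne hj)
          have hbe : bseq (u ++ [a]) (u.length + 1) = bseq u u.length + 1 := by
            rw [hbseq_end, if_pos (by omega)]
          refine ⟨?_, isAreaSeq_ins (psi u) ihseq hle, ?_, ?_, ?_⟩
          · rw [length_ins (psi u) hle, ihlen, hw_len]
          · rw [hw_len, hbe, hMaxbcard']
            omega
          · rw [hw_len, hbe, hg, hMaxa',
              Finset.card_image_of_injective _ (fun x y h => by omega), hfe]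
            omega
          · rw [hbc, hmax', if_neg (by omega), ihbounce]
            omega

end Main
/-- For a nonempty area sequence `w`, the number of bounces of `w` equals the
maximal value of `ψ w`. -/
theorem card_bounces_eq_maxVal_psi (w : List ℕ) (hw : IsAreaSeq w) (hne : w ≠ []) :
    (bounces w).card = maxVal (psi w) := by
  exact (key w hw hne).2.2.2.2
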